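/- Let L, M1, M2 be natural numbers with 1 ≤ M1 ≤ L and M2 < M1. Then ∑_{q=1}^{M1} C(L + M2 - M1 + 1, q) · C(M1 - 1, q - 1) · C(q - 1, M2) = C(L, M1) · C(M1 - 1, M2), computed in the natural numbers. -/

import Mathlib

/-- Chu–Vandermonde-type rewriting of the sl(1|2) multiplicity: for
`1 ≤ M₁ ≤ L` and `M₂ < M₁`,
`∑_{q=1}^{M₁} C(L+M₂-M₁+1, q) C(M₁-1, q-1) C(q-1, M₂) = C(L,M₁) C(M₁-1,M₂)`. -/
theorem sl12_chu_vandermonde_rewrite (L M1 M2 : ℕ) (h1 : 1 ≤ M1) (h2 : M1 ≤ L)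
    (h3 : M2 < M1) :
    ∑ q ∈ Finset.Icc 1 M1,
        (L + M2 - M1 + 1).choose q * (M1 - 1).choose (q - 1) * (q - 1).choose M2 =
      L.choose M1 * (M1 - 1).choose M2 := by
  set n := L + M2 - M1 + 1 with hn
  set m := M1 - 1 - M2 with hm
  have key : ∀ q ∈ Finset.Icc 1 M1,
      n.choose q * (M1 - 1).choose (q - 1) * (q - 1).choose M2 =
      n.choose q * m.choose (M1 - q) * (M1 - 1).choose M2 := by
    intro q hq
    simp only [Finset.mem_Icc] at hq
    rcases lt_or_ge (q - 1) M2 with h | h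
    · rw [Nat.choose_eq_zero_of_lt h,
        Nat.choose_eq_zero_of_lt (show m < M1 - q by omega)]
      ring
    · rw [mul_assoc, Nat.choose_mul (n := M1 - 1) h, ← hm]
      have h4 : M1 - q = m - (q - 1 - M2) := by omega
      rw [h4, Nat.choose_symm (by omega)]
      ring
  rw [Finset.sum_congr rfl key, ← Finset.sum_mul]
  congr 1
  have hL : n + m = L := by omega
  have hvdm : L.choose M1 = ∑ q ∈ Finset.range (M1 + 1), n.choose q * m.choose (M1 - q) := by
    rw [← hL, Nat.add_choose_eq, Finset.Nat.sum_antidiagonal_eq_sum_range_succ_mk]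
  have hset : Finset.range (M1 + 1) = insert 0 (Finset.Icc 1 M1) := by
    ext x
    simp only [Finset.mem_range, Finset.mem_insert, Finset.mem_Icc]
    omega
  rw [hvdm, hset, Finset.sum_insert (by simp)]
  rw [Nat.choose_zero_right, Nat.sub_zero, Nat.choose_eq_zero_of_lt (show m < M1 by omega)]
  ring
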